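/- Let r_0 > 1 and define r_i = 1 + ln(r_{i-1}) for i ≥ 1. Then there is a constant c > 0 such that for all sufficiently large n, r_n ≤ 1 + c/n. -/

import Mathlib

lemma log_le_sub_sq_div_eight {x : ℝ} (hx : 0 < x) (hx1 : x ≤ 1) :
    Real.log (1 + x) ≤ x - x ^ 2 / 8 := by
  set t : ℝ := x - x ^ 2 / 8 with ht
  have ht0 : 0 ≤ t / 2 := by nlinarith
  have h1 : 1 + t / 2 ≤ Real.exp (t / 2) := by linarith [Real.add_one_le_exp (t / 2)]
  have h2 : (1 + t / 2) ^ 2 ≤ Real.exp (t / 2) ^ 2 := by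
    have : 0 ≤ 1 + t / 2 := by linarith
    nlinarith [Real.exp_pos (t / 2)]
  have h3 : Real.exp (t / 2) ^ 2 = Real.exp t := by
    rw [← Real.exp_nat_mul]; ring_nf
  have h4 : 1 + x ≤ (1 + t / 2) ^ 2 := by nlinarith
  have h5 : 1 + x ≤ Real.exp t := by linarith [h3 ▸ h2]
  calc Real.log (1 + x) ≤ Real.log (Real.exp t) :=
        Real.log_le_log (by linarith) h5
    _ = t := Real.log_exp t

lemma log_le_sub_const {d : ℝ} (hd : 1 ≤ d) :
    Real.log (1 + d) ≤ d - (1 - Real.log 2) := by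
  have h1 : Real.log ((1 + d) / 2) ≤ (1 + d) / 2 - 1 :=
    Real.log_le_sub_one_of_pos (by linarith)
  have h2 : Real.log ((1 + d) / 2) = Real.log (1 + d) - Real.log 2 :=
    Real.log_div (by linarith) (by norm_num)
  rw [h2] at h1
  linarith

theorem iterated_log_seq_one_add_c_div_n (r : ℕ → ℝ)
    (h0 : 1 < r 0)
    (hrec : ∀ i : ℕ, r (i + 1) = 1 + Real.log (r i)) :
    ∃ c : ℝ, 0 < c ∧ ∃ N : ℕ, ∀ n : ℕ, N ≤ n → r n ≤ 1 + c / n := by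
  have hgt : ∀ n, 1 < r n := by
    intro n
    induction n with
    | zero => exact h0
    | succ k ih =>
      have := Real.log_pos ih
      rw [hrec k]; linarith
  set d : ℕ → ℝ := fun n => r n - 1 with hd
  have hdpos : ∀ n, 0 < d n := fun n => by simpa [hd] using sub_pos.mpr (hgt n)
  have hdrec : ∀ n, d (n + 1) = Real.log (1 + d n) := by
    intro n
    simp only [hd, hrec n]
    ring_nf
  clear_value d
  have hlog2 : Real.log 2 < 1 := by
    have := Real.log_two_lt_d9
    linarith
  -- Phase 1: there is N with d N ≤ 1
  have hN : ∃ N, d N ≤ 1 := by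
    by_contra h
    push_neg at h
    have hdec : ∀ n, d n ≤ d 0 - n * (1 - Real.log 2) := by
      intro n
      induction n with
      | zero => simp
      | succ k ih =>
        have hk : 1 ≤ d k := le_of_lt (h k)
        have := log_le_sub_const hk
        rw [hdrec k]
        push_cast
        linarith
    obtain ⟨n, hn⟩ := exists_nat_gt ((d 0 - 1) / (1 - Real.log 2))
    have h1 : (d 0 - 1) < n * (1 - Real.log 2) := by
      rw [div_lt_iff₀ (by linarith)] at hn
      linarith
    have := hdec n
    have := h n
    linarith
  obtain ⟨N, hN1⟩ := hN
  -- Phase 2: for all k, d (N + k) ≤ 1 and k ≤ 8 / d (N + k)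
  have key : ∀ k : ℕ, d (N + k) ≤ 1 ∧ (k : ℝ) ≤ 8 / d (N + k) := by
    intro k
    induction k with
    | zero =>
      refine ⟨by simpa using hN1, ?_⟩
      simp only [Nat.cast_zero]
      exact le_of_lt (div_pos (by norm_num) (hdpos _))
    | succ k ih =>
      obtain ⟨ih1, ih2⟩ := ih
      have ha : 0 < d (N + k) := hdpos _
      have hb : 0 < d (N + k + 1) := hdpos _
      have hstep : d (N + k + 1) ≤ d (N + k) - d (N + k) ^ 2 / 8 := by
        rw [hdrec]
        exact log_le_sub_sq_div_eight ha ih1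
      have h1 : d (N + (k + 1)) ≤ 1 := by
        have : N + (k + 1) = N + k + 1 := by ring
        rw [this]
        nlinarith [sq_nonneg (d (N + k))]
      refine ⟨h1, ?_⟩
      have hNk : N + (k + 1) = N + k + 1 := by ring
      rw [hNk]
      push_cast
      have h2 : 8 / d (N + k) + 1 ≤ 8 / d (N + k + 1) := by
        rw [div_add' _ _ _ (ne_of_gt ha), div_le_div_iff₀ ha hb]
        nlinarith [mul_le_mul_of_nonneg_left hstep (by linarith : (0:ℝ) ≤ 8 + d (N + k)), mul_nonneg (mul_nonneg ha.le ha.le) ha.le]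
      linarith
  refine ⟨16, by norm_num, 2 * N + 2, ?_⟩
  intro n hn
  set k : ℕ := n - N with hk
  have hnk : n = N + k := by omega
  obtain ⟨hle1, hle2⟩ := key k
  rw [← hnk] at hle1 hle2
  have hdn : 0 < d n := hdpos n
  have hkpos : (0 : ℝ) < k := by
    have : 1 ≤ k := by omega
    exact_mod_cast Nat.lt_of_lt_of_le Nat.zero_lt_one this
  have h8 : d n * k ≤ 8 := by
    rw [le_div_iff₀ hdn] at hle2
    linarith
  have hk2 : (n : ℝ) ≤ 2 * k := by
    have : n ≤ 2 * k := by omega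
    exact_mod_cast this
  have hnpos : (0 : ℝ) < n := by
    have : 0 < n := by omega
    exact_mod_cast this
  have : d n ≤ 16 / n := by
    rw [le_div_iff₀ hnpos]
    nlinarith
  rw [hd] at this
  simp only at this
  linarith
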